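/- For every p ∈ (0, (3-√5)/2), the point N(p) = 1/√p + 1 - (5/2)p satisfies t^(D)(N(p), p) < 1, where t^(D)(N,p) = 1 - q^N + (1 - p·q^(N-1))/N and q = 1-p. -/

import Mathlib

set_option maxHeartbeats 1000000 in
theorem stmt_11 (p : ℝ) (hp : p ∈ Set.Ioo (0:ℝ) ((3 - Real.sqrt 5) / 2)) :
    ∀ q : ℝ, q = 1 - p →
    ∀ N : ℝ, N = 1 / Real.sqrt p + 1 - (5 / 2) * p →
    1 - q ^ N + (1 - p * q ^ (N - 1)) / N < 1 := by
  obtain ⟨hp0, hp1⟩ := hp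
  intro q hq N hN
  set s := Real.sqrt p with hs
  have hs0 : 0 < s := Real.sqrt_pos.mpr hp0
  have hs2 : s ^ 2 = p := Real.sq_sqrt hp0.le
  have h5 : Real.sqrt 5 ^ 2 = 5 := Real.sq_sqrt (by norm_num)
  have h5p : 0 < Real.sqrt 5 := Real.sqrt_pos.mpr (by norm_num)
  have hss : s ^ 2 + s < 1 := by nlinarith [sq_nonneg (2*s + 1 - Real.sqrt 5)]
  have hs1 : s < 1 := by nlinarith
  have hplt : p < 1 := by nlinarith
  have hq0 : 0 < q := by rw [hq]; linarith
  obtain ⟨M, hMs, hNM⟩ : ∃ M : ℝ, M * s = 1 - 5 / 2 * s ^ 3 ∧ N = M + 1 :=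
    ⟨1 / s - 5 / 2 * s ^ 2, by field_simp, by rw [hN, ← hs2]; ring⟩
  clear_value s
  clear hs hN
  have hcube : s ^ 3 ≤ s - s ^ 2 := by nlinarith
  have hM0 : 0 < M := by
    rcases le_or_gt M 0 with h | h
    · exfalso
      have h2 : M * s ≤ 0 := mul_nonpos_of_nonpos_of_nonneg h hs0.le
      nlinarith [sq_nonneg (s - 1/2)]
    · exact h
  have hN0 : 0 < N := by rw [hNM]; linarith
  have hqM : 0 < q ^ M := Real.rpow_pos_of_pos hq0 M
  have h1Mq : 0 < 1 + M * q := by nlinarith [mul_pos hM0 hq0]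
  have hsplit : q ^ N = q ^ M * q := by
    rw [hNM, Real.rpow_add hq0, Real.rpow_one]
  have hsplit2 : q ^ (N - 1) = q ^ M := by
    rw [hNM]; norm_num
  have key : 1 < q ^ M * (1 + M * q) := by
    rcases le_or_gt M 1 with hM1 | hM1
    · -- small M case: q^M ≥ q / (1 - (1-M)p)
      have hb0 := rpow_one_add_le_one_add_mul_self (s := -p) (p := 1 - M)
        (by linarith) (by linarith) (by linarith)
      have hb : q ^ (1 - M) ≤ 1 - (1 - M) * p := by
        have heq : (1 : ℝ) + -p = q := by rw [hq]; ring
        rw [heq] at hb0; linarith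
      have hD : 0 < 1 - (1 - M) * p := by nlinarith [mul_pos hM0 hp0]
      have hprod : q ^ M * q ^ (1 - M) = q := by
        rw [← Real.rpow_add hq0]; norm_num
      have h1f : 0 < 1 - s - s ^ 2 := by linarith
      have hQ : 0 < 1 + s - s ^ 2 - 5/2*s^3 - 5/2*s^4 + 5/2*s^5 := by
        nlinarith [mul_pos hs0 hs0, mul_pos (mul_pos hs0 hs0) hs0, sq_nonneg (s - 1/2),
          mul_pos h1f hs0, mul_pos (mul_pos h1f hs0) hs0]
      have hP := mul_pos h1f hQ
      have key2 : s * (q * (1 + M * q) - (1 - (1 - M) * p)) =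
          (1 - s - s ^ 2) * (1 + s - s ^ 2 - 5/2*s^3 - 5/2*s^4 + 5/2*s^5) := by
        rw [hq, ← hs2]
        linear_combination ((1 - s^2)^2 - s^2) * hMs
      have hpoly : 1 - (1 - M) * p < q * (1 + M * q) := by nlinarith [hP, key2, hs0]
      have hqD : q / (1 - (1 - M) * p) ≤ q ^ M := by
        rw [div_le_iff₀ hD]
        calc q = q ^ M * q ^ (1 - M) := hprod.symm
          _ ≤ q ^ M * (1 - (1 - M) * p) := mul_le_mul_of_nonneg_left hb hqM.le
      have hstep : 1 < q / (1 - (1 - M) * p) * (1 + M * q) := by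
        rw [div_mul_eq_mul_div, lt_div_iff₀ hD]; nlinarith
      calc (1:ℝ) < q / (1 - (1 - M) * p) * (1 + M * q) := hstep
        _ ≤ q ^ M * (1 + M * q) := mul_le_mul_of_nonneg_right hqD h1Mq.le
    · -- large M case: Bernoulli q^M ≥ 1 - Mp
      have hb0 := one_add_mul_self_le_rpow_one_add (s := -p) (p := M)
        (by linarith) hM1.le
      have hb : 1 - M * p ≤ q ^ M := by
        have heq : (1 : ℝ) + -p = q := by rw [hq]; ring
        rw [heq] at hb0; linarith
      have hpos : 0 < q - p - M * p * q := by
        have key2 : s * (q - p - M * p * q) =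
            s - s^2 - 2*s^3 + s^4 + 5/2*s^5 - 5/2*s^7 := by
          rw [hq, ← hs2]
          linear_combination (-(s^2 * (1 - s^2))) * hMs
        have hR : 0 < s - s^2 - 2*s^3 + s^4 + 5/2*s^5 - 5/2*s^7 := by
          nlinarith [mul_pos hs0 hs0, sq_nonneg (s - 1/2), mul_pos (mul_pos hs0 hs0) hs0,
            sq_nonneg (s^2 - s), mul_pos hs0 (mul_pos hs0 (mul_pos hs0 hs0))]
        nlinarith [key2, hR, hs0]
      have hpoly2 : 1 < (1 - M * p) * (1 + M * q) := by
        nlinarith [mul_pos hM0 hpos]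
      calc (1:ℝ) < (1 - M * p) * (1 + M * q) := hpoly2
        _ ≤ q ^ M * (1 + M * q) := mul_le_mul_of_nonneg_right hb h1Mq.le
  rw [hsplit, hsplit2]
  have heq2 : q ^ M * q * N + p * q ^ M = q ^ M * (1 + M * q) := by
    rw [hNM, hq]; ring
  have hdiv : (1 - p * q ^ M) / N < q ^ M * q := by
    rw [div_lt_iff₀ hN0]; linarith
  linarith
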